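/- Let n ≥ 2 and let W₁, W₂, W₃ be linear subspaces of ℝⁿ with W₁ ⊆ {y₁ = 0}, W₂ ⊆ {y₂ = 0}, and W₃ ⊆ {y₁ − y₂ = 0}. If {W₁,W₂,W₃} is a redundant triple of subspaces, i.e., ξ ∉ K₁₂ + K₁₃ + K₂₃, then dim(W₁ + W₂ + W₃) + 1 ≤ dim W₁ + dim W₂ + dim W₃ − dim(W₁∩W₂) − dim(W₁∩W₃) − dim(W₂∩W₃) + dim(W₁∩W₂∩W₃); in particular, the triple does not satisfy the inclusion–exclusion principle for dimensions. -/

import Mathlib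

/-- The `i`-th standard basis vector of `ℝⁿ`. -/
noncomputable def eVec (n : ℕ) (i : Fin n) : EuclideanSpace ℝ (Fin n) :=
  EuclideanSpace.single i 1

/-- `u ↦ (u, -u, 0)`. -/
noncomputable def emb12 (n : ℕ) :
    EuclideanSpace ℝ (Fin n) →ₗ[ℝ]
      EuclideanSpace ℝ (Fin n) × EuclideanSpace ℝ (Fin n) × EuclideanSpace ℝ (Fin n) :=
  LinearMap.prod LinearMap.id (LinearMap.prod (-LinearMap.id) 0)

/-- `u ↦ (u, 0, -u)`. -/
noncomputable def emb13 (n : ℕ) :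
    EuclideanSpace ℝ (Fin n) →ₗ[ℝ]
      EuclideanSpace ℝ (Fin n) × EuclideanSpace ℝ (Fin n) × EuclideanSpace ℝ (Fin n) :=
  LinearMap.prod LinearMap.id (LinearMap.prod 0 (-LinearMap.id))

/-- `u ↦ (0, u, -u)`. -/
noncomputable def emb23 (n : ℕ) :
    EuclideanSpace ℝ (Fin n) →ₗ[ℝ]
      EuclideanSpace ℝ (Fin n) × EuclideanSpace ℝ (Fin n) × EuclideanSpace ℝ (Fin n) :=
  LinearMap.prod 0 (LinearMap.prod LinearMap.id (-LinearMap.id))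

/-- `K₁₂ = {(u, -u, 0) : u ∈ W₁^⊥ ∩ W₂^⊥}`. -/
noncomputable def K12 (n : ℕ) (W1 W2 : Submodule ℝ (EuclideanSpace ℝ (Fin n))) :
    Submodule ℝ (EuclideanSpace ℝ (Fin n) × EuclideanSpace ℝ (Fin n) × EuclideanSpace ℝ (Fin n)) :=
  (W1ᗮ ⊓ W2ᗮ).map (emb12 n)

/-- `K₁₃ = {(u, 0, -u) : u ∈ W₁^⊥ ∩ W₃^⊥}`. -/
noncomputable def K13 (n : ℕ) (W1 W3 : Submodule ℝ (EuclideanSpace ℝ (Fin n))) :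
    Submodule ℝ (EuclideanSpace ℝ (Fin n) × EuclideanSpace ℝ (Fin n) × EuclideanSpace ℝ (Fin n)) :=
  (W1ᗮ ⊓ W3ᗮ).map (emb13 n)

/-- `K₂₃ = {(0, u, -u) : u ∈ W₂^⊥ ∩ W₃^⊥}`. -/
noncomputable def K23 (n : ℕ) (W2 W3 : Submodule ℝ (EuclideanSpace ℝ (Fin n))) :
    Submodule ℝ (EuclideanSpace ℝ (Fin n) × EuclideanSpace ℝ (Fin n) × EuclideanSpace ℝ (Fin n)) :=
  (W2ᗮ ⊓ W3ᗮ).map (emb23 n)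

/-- The vector `ξ = (-e₁, e₂, e₁ - e₂)`, where `i, j` play the roles of the indices `1, 2`. -/
noncomputable def xiVec (n : ℕ) (i j : Fin n) :
    EuclideanSpace ℝ (Fin n) × EuclideanSpace ℝ (Fin n) × EuclideanSpace ℝ (Fin n) :=
  (-(eVec n i), eVec n j, eVec n i - eVec n j)


section Stmt18Aux

open Module Submodule

namespace Stmt18Aux

lemma emb12_apply {n : ℕ} (u : EuclideanSpace ℝ (Fin n)) : emb12 n u = (u, -u, 0) := rfl
lemma emb13_apply {n : ℕ} (u : EuclideanSpace ℝ (Fin n)) : emb13 n u = (u, 0, -u) := rfl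
lemma emb23_apply {n : ℕ} (u : EuclideanSpace ℝ (Fin n)) : emb23 n u = (0, u, -u) := rfl

variable {n : ℕ} (V1 V2 V3 : Submodule ℝ (EuclideanSpace ℝ (Fin n)))

noncomputable def fmap : (V1 × V2 × V3) →ₗ[ℝ] EuclideanSpace ℝ (Fin n) :=
  V1.subtype.coprod (V2.subtype.coprod V3.subtype)

noncomputable def jmap : (V1 × V2 × V3) →ₗ[ℝ]
    (EuclideanSpace ℝ (Fin n) × EuclideanSpace ℝ (Fin n) × EuclideanSpace ℝ (Fin n)) :=
  V1.subtype.prodMap (V2.subtype.prodMap V3.subtype)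

lemma jmap_inj : Function.Injective (jmap V1 V2 V3) := by
  rintro ⟨a, b, c⟩ ⟨a', b', c'⟩ h
  simp only [jmap, LinearMap.prodMap_apply, Prod.map, Submodule.coe_subtype, Prod.mk.injEq] at h
  simp only [Prod.mk.injEq]
  exact ⟨Subtype.ext h.1, Subtype.ext h.2.1, Subtype.ext h.2.2⟩

noncomputable def Nsub : Submodule ℝ
    (EuclideanSpace ℝ (Fin n) × EuclideanSpace ℝ (Fin n) × EuclideanSpace ℝ (Fin n)) :=
  (LinearMap.ker (fmap V1 V2 V3)).map (jmap V1 V2 V3)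

lemma mem_Nsub {a b c : EuclideanSpace ℝ (Fin n)} (ha : a ∈ V1) (hb : b ∈ V2) (hc : c ∈ V3)
    (h : a + b + c = 0) : (a, b, c) ∈ Nsub V1 V2 V3 := by
  refine ⟨(⟨a, ha⟩, ⟨b, hb⟩, ⟨c, hc⟩), ?_, rfl⟩
  simp only [SetLike.mem_coe, LinearMap.mem_ker, fmap, LinearMap.coprod_apply,
    Submodule.coe_subtype]
  rw [← add_assoc]; exact h

lemma finrank_Nsub : finrank ℝ (Nsub V1 V2 V3) + finrank ℝ ↥(V1 ⊔ V2 ⊔ V3)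
    = finrank ℝ V1 + finrank ℝ V2 + finrank ℝ V3 := by
  have h1 : finrank ℝ (Nsub V1 V2 V3) = finrank ℝ (LinearMap.ker (fmap V1 V2 V3)) :=
    (Submodule.equivMapOfInjective (jmap V1 V2 V3) (jmap_inj V1 V2 V3) _).symm.finrank_eq
  have h2 : LinearMap.range (fmap V1 V2 V3) = V1 ⊔ V2 ⊔ V3 := by
    simp [fmap, LinearMap.range_coprod, Submodule.range_subtype, sup_assoc]
  have h3 := LinearMap.finrank_range_add_finrank_ker (fmap V1 V2 V3)
  rw [h2] at h3
  have h4 : finrank ℝ (↥V1 × ↥V2 × ↥V3) = finrank ℝ V1 + (finrank ℝ V2 + finrank ℝ V3) := by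
    simp [Module.finrank_prod]
  omega

noncomputable def gmap : (↥(V1 ⊓ V2) × ↥(V1 ⊓ V3) × ↥(V2 ⊓ V3)) →ₗ[ℝ]
    (EuclideanSpace ℝ (Fin n) × EuclideanSpace ℝ (Fin n) × EuclideanSpace ℝ (Fin n)) :=
  ((emb12 n).comp (V1 ⊓ V2).subtype).coprod
    (((emb13 n).comp (V1 ⊓ V3).subtype).coprod ((emb23 n).comp (V2 ⊓ V3).subtype))

lemma gmap_apply (u : ↥(V1 ⊓ V2)) (v : ↥(V1 ⊓ V3)) (w : ↥(V2 ⊓ V3)) :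
    gmap V1 V2 V3 (u, v, w) = ((u : EuclideanSpace ℝ (Fin n)) + (v : EuclideanSpace ℝ (Fin n)),
      -(u : EuclideanSpace ℝ (Fin n)) + (w : EuclideanSpace ℝ (Fin n)),
      -(v : EuclideanSpace ℝ (Fin n)) + -(w : EuclideanSpace ℝ (Fin n))) := by
  simp only [gmap, LinearMap.coprod_apply, LinearMap.comp_apply, Submodule.coe_subtype,
    emb12_apply, emb13_apply, emb23_apply, Prod.mk_add_mk, add_zero, zero_add]

lemma range_gmap : LinearMap.range (gmap V1 V2 V3)
    = (V1 ⊓ V2).map (emb12 n) ⊔ ((V1 ⊓ V3).map (emb13 n) ⊔ (V2 ⊓ V3).map (emb23 n)) := by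
  simp [gmap, LinearMap.range_coprod, LinearMap.range_comp, Submodule.range_subtype]

noncomputable def hmap : ↥(V1 ⊓ V2 ⊓ V3) →ₗ[ℝ] (↥(V1 ⊓ V2) × ↥(V1 ⊓ V3) × ↥(V2 ⊓ V3)) :=
  (Submodule.inclusion inf_le_left).prod
    ((-(Submodule.inclusion (le_inf (inf_le_left.trans inf_le_left) inf_le_right))).prod
      (Submodule.inclusion (le_inf (inf_le_left.trans inf_le_right) inf_le_right)))

lemma hmap_inj : Function.Injective (hmap V1 V2 V3) := by
  intro x y h
  have := congrArg Prod.fst h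
  simp only [hmap, LinearMap.prod_apply, Pi.prod] at this
  exact Subtype.ext (congrArg Subtype.val this : _)

lemma range_hmap : LinearMap.range (hmap V1 V2 V3) = LinearMap.ker (gmap V1 V2 V3) := by
  apply le_antisymm
  · rintro - ⟨u, rfl⟩
    simp only [LinearMap.mem_ker, hmap, LinearMap.prod_apply, Function.prod, LinearMap.neg_apply,
      gmap_apply]
    simp [Prod.ext_iff]
  · rintro ⟨u, v, w⟩ h
    simp only [LinearMap.mem_ker, gmap_apply, Prod.ext_iff, Prod.mk.injEq,
      Prod.fst_zero, Prod.snd_zero] at h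
    obtain ⟨h1, h2, h3⟩ := h
    have hv : (v : EuclideanSpace ℝ (Fin n)) = -u := by linear_combination (norm := module) h1
    have hw : (w : EuclideanSpace ℝ (Fin n)) = u := by linear_combination (norm := module) h2
    have hu3 : (u : EuclideanSpace ℝ (Fin n)) ∈ V3 := by
      have := w.2.2; rwa [hw] at this
    refine ⟨⟨u, ⟨u.2, hu3⟩⟩, ?_⟩
    simp only [hmap, LinearMap.prod_apply, Function.prod, LinearMap.neg_apply, Prod.mk.injEq]
    refine ⟨Subtype.ext rfl, Subtype.ext ?_, Subtype.ext ?_⟩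
    · simp [Submodule.coe_inclusion, hv]
    · simp [Submodule.coe_inclusion, hw]

lemma finrank_Ssub : finrank ℝ
      ↥((V1 ⊓ V2).map (emb12 n) ⊔ ((V1 ⊓ V3).map (emb13 n) ⊔ (V2 ⊓ V3).map (emb23 n)))
      + finrank ℝ ↥(V1 ⊓ V2 ⊓ V3)
    = finrank ℝ ↥(V1 ⊓ V2) + finrank ℝ ↥(V1 ⊓ V3) + finrank ℝ ↥(V2 ⊓ V3) := by
  have h3 := LinearMap.finrank_range_add_finrank_ker (gmap V1 V2 V3)
  rw [range_gmap, ← range_hmap] at h3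
  rw [LinearMap.finrank_range_of_inj (hmap_inj V1 V2 V3)] at h3
  have h4 : finrank ℝ (↥(V1 ⊓ V2) × ↥(V1 ⊓ V3) × ↥(V2 ⊓ V3))
      = finrank ℝ ↥(V1 ⊓ V2) + (finrank ℝ ↥(V1 ⊓ V3) + finrank ℝ ↥(V2 ⊓ V3)) := by
    simp [Module.finrank_prod]
  omega

end Stmt18Aux

end Stmt18Aux

/-- A redundant triple of subspaces fails the inclusion–exclusion principle for dimensions:
`dim(W₁+W₂+W₃) + 1 ≤ dim W₁ + dim W₂ + dim W₃ - dim(W₁∩W₂) - dim(W₁∩W₃) - dim(W₂∩W₃)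
+ dim(W₁∩W₂∩W₃)`. -/
theorem stmt_18 (n : ℕ) (hn : 2 ≤ n)
    (W1 W2 W3 : Submodule ℝ (EuclideanSpace ℝ (Fin n)))
    (hW1 : ∀ x ∈ W1, x ⟨0, by omega⟩ = 0)
    (hW2 : ∀ x ∈ W2, x ⟨1, by omega⟩ = 0)
    (hW3 : ∀ x ∈ W3, x ⟨0, by omega⟩ - x ⟨1, by omega⟩ = 0)
    (hred : xiVec n ⟨0, by omega⟩ ⟨1, by omega⟩ ∉
      K12 n W1 W2 + K13 n W1 W3 + K23 n W2 W3) :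
    (Module.finrank ℝ ↥(W1 ⊔ W2 ⊔ W3) : ℤ) + 1 ≤
      (Module.finrank ℝ ↥W1 : ℤ) + (Module.finrank ℝ ↥W2 : ℤ) + (Module.finrank ℝ ↥W3 : ℤ)
        - (Module.finrank ℝ ↥(W1 ⊓ W2) : ℤ) - (Module.finrank ℝ ↥(W1 ⊓ W3) : ℤ)
        - (Module.finrank ℝ ↥(W2 ⊓ W3) : ℤ)
        + (Module.finrank ℝ ↥(W1 ⊓ W2 ⊓ W3) : ℤ) := by
  classical
  open Module Submodule Stmt18Aux in
  set i0 : Fin n := ⟨0, by omega⟩ with hi0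
  set i1 : Fin n := ⟨1, by omega⟩ with hi1
  -- membership of the components of ξ in the orthogonal complements
  have he1 : eVec n i0 ∈ W1ᗮ := by
    rw [Submodule.mem_orthogonal]
    intro u hu
    rw [eVec, EuclideanSpace.inner_single_right]
    simp [hW1 u hu]
  have he2 : eVec n i1 ∈ W2ᗮ := by
    rw [Submodule.mem_orthogonal]
    intro u hu
    rw [eVec, EuclideanSpace.inner_single_right]
    simp [hW2 u hu]
  have he3 : eVec n i0 - eVec n i1 ∈ W3ᗮ := by
    rw [Submodule.mem_orthogonal]
    intro u hu
    rw [inner_sub_right, eVec, eVec, EuclideanSpace.inner_single_right,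
      EuclideanSpace.inner_single_right]
    have := hW3 u hu
    simp only [RCLike.star_def, starRingEnd_apply, star_trivial, one_mul]
    linarith
  have hxi : xiVec n i0 i1 ∈ Stmt18Aux.Nsub W1ᗮ W2ᗮ W3ᗮ := by
    rw [xiVec]
    exact Stmt18Aux.mem_Nsub _ _ _ (neg_mem he1) he2 he3 (by abel)
  -- S ≤ N
  have hS : K12 n W1 W2 + K13 n W1 W3 + K23 n W2 W3 ≤ Stmt18Aux.Nsub W1ᗮ W2ᗮ W3ᗮ := by
    simp only [Submodule.add_eq_sup]
    refine sup_le (sup_le ?_ ?_) ?_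
    · rintro - ⟨u, hu, rfl⟩
      rw [Stmt18Aux.emb12_apply]
      exact Stmt18Aux.mem_Nsub _ _ _ hu.1 (neg_mem hu.2) (zero_mem _) (by abel)
    · rintro - ⟨u, hu, rfl⟩
      rw [Stmt18Aux.emb13_apply]
      exact Stmt18Aux.mem_Nsub _ _ _ hu.1 (zero_mem _) (neg_mem hu.2) (by abel)
    · rintro - ⟨u, hu, rfl⟩
      rw [Stmt18Aux.emb23_apply]
      exact Stmt18Aux.mem_Nsub _ _ _ (zero_mem _) hu.1 (neg_mem hu.2) (by abel)
  have hlt : K12 n W1 W2 + K13 n W1 W3 + K23 n W2 W3 < Stmt18Aux.Nsub W1ᗮ W2ᗮ W3ᗮ :=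
    lt_of_le_of_ne hS (fun h => hred (h.symm ▸ hxi))
  have hcard : Module.finrank ℝ ↥(K12 n W1 W2 + K13 n W1 W3 + K23 n W2 W3) + 1
      ≤ Module.finrank ℝ (Stmt18Aux.Nsub W1ᗮ W2ᗮ W3ᗮ) :=
    Submodule.finrank_lt_finrank_of_lt hlt
  -- dimension formulas
  have hA := Stmt18Aux.finrank_Nsub W1ᗮ W2ᗮ W3ᗮ
  have hB : Module.finrank ℝ ↥(K12 n W1 W2 + K13 n W1 W3 + K23 n W2 W3)
        + Module.finrank ℝ ↥(W1ᗮ ⊓ W2ᗮ ⊓ W3ᗮ)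
      = Module.finrank ℝ ↥(W1ᗮ ⊓ W2ᗮ) + Module.finrank ℝ ↥(W1ᗮ ⊓ W3ᗮ)
        + Module.finrank ℝ ↥(W2ᗮ ⊓ W3ᗮ) := by
    have := Stmt18Aux.finrank_Ssub W1ᗮ W2ᗮ W3ᗮ
    have he : K12 n W1 W2 + K13 n W1 W3 + K23 n W2 W3
        = (W1ᗮ ⊓ W2ᗮ).map (emb12 n) ⊔ ((W1ᗮ ⊓ W3ᗮ).map (emb13 n) ⊔ (W2ᗮ ⊓ W3ᗮ).map (emb23 n)) := by
      simp only [Submodule.add_eq_sup, K12, K13, K23, sup_assoc]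
    rw [he]
    exact this
  have hs12 := Submodule.finrank_sup_add_finrank_inf_eq W1ᗮ W2ᗮ
  have hs13 := Submodule.finrank_sup_add_finrank_inf_eq W1ᗮ W3ᗮ
  have hs23 := Submodule.finrank_sup_add_finrank_inf_eq W2ᗮ W3ᗮ
  have hE : Module.finrank ℝ (EuclideanSpace ℝ (Fin n)) = n := finrank_euclideanSpace_fin
  have hw1 : Module.finrank ℝ W1 + Module.finrank ℝ W1ᗮ = n := by
    have h := Submodule.finrank_add_finrank_orthogonal W1
    rw [hE] at h; exact h
  have hw2 : Module.finrank ℝ W2 + Module.finrank ℝ W2ᗮ = n := by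
    have h := Submodule.finrank_add_finrank_orthogonal W2
    rw [hE] at h; exact h
  have hw3 : Module.finrank ℝ W3 + Module.finrank ℝ W3ᗮ = n := by
    have h := Submodule.finrank_add_finrank_orthogonal W3
    rw [hE] at h; exact h
  have ho12 : Module.finrank ℝ ↥(W1ᗮ ⊔ W2ᗮ) + Module.finrank ℝ ↥(W1 ⊓ W2) = n := by
    have h := Submodule.finrank_add_finrank_orthogonal (W1ᗮ ⊔ W2ᗮ)
    rw [← Submodule.inf_orthogonal, Submodule.orthogonal_orthogonal,
      Submodule.orthogonal_orthogonal, hE] at h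
    exact h
  have ho13 : Module.finrank ℝ ↥(W1ᗮ ⊔ W3ᗮ) + Module.finrank ℝ ↥(W1 ⊓ W3) = n := by
    have h := Submodule.finrank_add_finrank_orthogonal (W1ᗮ ⊔ W3ᗮ)
    rw [← Submodule.inf_orthogonal, Submodule.orthogonal_orthogonal,
      Submodule.orthogonal_orthogonal, hE] at h
    exact h
  have ho23 : Module.finrank ℝ ↥(W2ᗮ ⊔ W3ᗮ) + Module.finrank ℝ ↥(W2 ⊓ W3) = n := by
    have h := Submodule.finrank_add_finrank_orthogonal (W2ᗮ ⊔ W3ᗮ)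
    rw [← Submodule.inf_orthogonal, Submodule.orthogonal_orthogonal,
      Submodule.orthogonal_orthogonal, hE] at h
    exact h
  have hotrip : Module.finrank ℝ ↥(W1 ⊔ W2 ⊔ W3) + Module.finrank ℝ ↥(W1ᗮ ⊓ W2ᗮ ⊓ W3ᗮ) = n := by
    have h := Submodule.finrank_add_finrank_orthogonal (W1 ⊔ W2 ⊔ W3)
    rw [← Submodule.inf_orthogonal, ← Submodule.inf_orthogonal, hE] at h
    exact h
  have hosup : Module.finrank ℝ ↥(W1ᗮ ⊔ W2ᗮ ⊔ W3ᗮ) + Module.finrank ℝ ↥(W1 ⊓ W2 ⊓ W3) = n := by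
    have h := Submodule.finrank_add_finrank_orthogonal (W1ᗮ ⊔ W2ᗮ ⊔ W3ᗮ)
    rw [← Submodule.inf_orthogonal, ← Submodule.inf_orthogonal,
      Submodule.orthogonal_orthogonal, Submodule.orthogonal_orthogonal,
      Submodule.orthogonal_orthogonal, hE] at h
    exact h
  omega
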